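/- Let m ∈ ℕ and let f_1, …, f_m : ℝ≥0 → ℝ be nondecreasing continuous functions with f_1(0) = f_2(0) = ⋯ = f_m(0). Then for every μ ≥ 0 an equalizing distribution of μ for f_1,…,f_m exists, and the resulting equalization Eq⟨f_1,…,f_m⟩ : ℝ≥0 → ℝ is a continuous nondecreasing function. Moreover, if at least one of f_1,…,f_m is Lipschitz with constant K, then Eq⟨f_1,…,f_m⟩ is Lipschitz with constant K. -/

import Mathlib

open scoped NNReal

/-- `EqDistOn m f S t h`: the total mass `t` admits an equalizing distribution
among the functions `(f j)_{j ∈ S}` with common value `h`; i.e., there are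
nonnegative reals `(ν j)_{j ∈ S}` summing to `t` with `f j (ν j) = h` for all
`j ∈ S`. When this holds, the equalization `Eq⟨f_j : j ∈ S⟩(t)` is defined and
equals `h`. -/
def EqDistOn (m : ℕ) (f : Fin m → ℝ≥0 → ℝ) (S : Finset (Fin m)) (t : ℝ≥0) (h : ℝ) : Prop :=
  ∃ ν : Fin m → ℝ≥0, ∑ j ∈ S, ν j = t ∧ ∀ j ∈ S, f j (ν j) = h

open Filter Topology Set

lemma exists_eq_strict (m : ℕ) (hm : 0 < m) (f : Fin m → ℝ≥0 → ℝ)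
    (hs : ∀ j, StrictMono (f j)) (hc : ∀ j, Continuous (f j))
    (h0 : ∀ i j : Fin m, f i 0 = f j 0)
    (htop : ∀ j, Tendsto (f j) atTop atTop) (μ : ℝ≥0) :
    ∃ ν : Fin m → ℝ≥0, (∑ j, ν j = μ) ∧ ∃ h, ∀ j, f j (ν j) = h := by
  classical
  set j0 : Fin m := ⟨0, hm⟩
  set g : Fin m → ℝ → ℝ := fun j x => f j x.toNNReal + min x 0 with hg
  have hgs : ∀ j, StrictMono (g j) := by
    intro j a b hab
    rcases le_or_gt b 0 with hb | hb
    · have : a.toNNReal ≤ b.toNNReal := Real.toNNReal_mono hab.le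
      have h1 : f j a.toNNReal ≤ f j b.toNNReal := (hs j).monotone this
      have h2 : min a 0 < min b 0 := by
        rw [min_eq_left hb, min_eq_left (hab.le.trans hb)]; exact hab
      simpa [hg] using add_lt_add_of_le_of_lt h1 h2
    · have h1 : f j a.toNNReal < f j b.toNNReal := by
        apply hs j
        exact (Real.toNNReal_lt_toNNReal_iff hb).2 hab
      have h2 : min a 0 ≤ min b 0 := min_le_min hab.le le_rfl
      simpa [hg] using add_lt_add_of_lt_of_le h1 h2
  have hgc : ∀ j, Continuous (g j) :=
    fun j => ((hc j).comp continuous_real_toNNReal).add (continuous_id.min continuous_const)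
  have hgtop : ∀ j, Tendsto (g j) atTop atTop := by
    intro j
    have h1 : Tendsto (fun x : ℝ => f j x.toNNReal) atTop atTop :=
      (htop j).comp tendsto_real_toNNReal_atTop
    have : (fun x : ℝ => f j x.toNNReal) =ᶠ[atTop] g j := by
      filter_upwards [eventually_ge_atTop (0:ℝ)] with x hx
      simp [hg, min_eq_right hx]
    exact h1.congr' this
  have hgbot : ∀ j, Tendsto (g j) atBot atBot := by
    intro j
    have h1 : Tendsto (fun x : ℝ => f j 0 + x) atBot atBot :=
      tendsto_atBot_add_const_left _ _ tendsto_id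
    have : (fun x : ℝ => f j 0 + x) =ᶠ[atBot] g j := by
      filter_upwards [eventually_le_atBot (0:ℝ)] with x hx
      simp [hg, Real.toNNReal_of_nonpos hx, min_eq_left hx]
    exact h1.congr' this
  have hgsurj : ∀ j, Function.Surjective (g j) :=
    fun j => (hgc j).surjective (hgtop j) (hgbot j)
  set e : Fin m → (ℝ ≃o ℝ) := fun j => StrictMono.orderIsoOfSurjective (g j) (hgs j) (hgsurj j)
    with he
  have heapp : ∀ j x, e j x = g j x := fun j x => rfl
  set φ : Fin m → ℝ → ℝ := fun j h => (e j).symm h with hφ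
  have hφg : ∀ j h, g j (φ j h) = h := fun j h => (e j).apply_symm_apply h
  set c0 : ℝ := f j0 0 with hc0
  have hφc0 : ∀ j, φ j c0 = 0 := by
    intro j
    have : g j 0 = c0 := by simp [hg, hc0, h0 j j0]
    rw [hφ]
    simp only [OrderIso.symm_apply_eq, heapp, this]
  set Φ : ℝ → ℝ := fun h => ∑ j, ((φ j h).toNNReal : ℝ) with hΦ
  have hΦc : Continuous Φ := by
    apply continuous_finset_sum
    intro j _
    exact NNReal.continuous_coe.comp (continuous_real_toNNReal.comp
      ((e j).symm.continuous))
  have hφmono : ∀ j, Monotone (φ j) := fun j => (e j).symm.monotone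
  -- value at c0 and at H
  have hΦc0 : Φ c0 = 0 := by
    simp [hΦ, hφc0]
  set H : ℝ := g j0 (μ : ℝ) with hH
  have hc0H : c0 ≤ H := by
    have : g j0 0 = c0 := by simp [hg, hc0]
    rw [← this, hH]
    exact (hgs j0).monotone (by positivity)
  have hφH : φ j0 H = (μ : ℝ) := by
    rw [hφ, OrderIso.symm_apply_eq]
    exact (heapp j0 _).symm ▸ rfl
  have hΦH : (μ : ℝ) ≤ Φ H := by
    have : ((φ j0 H).toNNReal : ℝ) = μ := by
      rw [hφH, Real.toNNReal_coe]
    rw [← this]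
    exact Finset.single_le_sum (f := fun j => ((φ j H).toNNReal : ℝ))
      (fun j _ => by positivity) (Finset.mem_univ j0)
  obtain ⟨h, hhmem, hΦh⟩ : ∃ h ∈ Icc c0 H, Φ h = μ := by
    have := intermediate_value_Icc hc0H hΦc.continuousOn
    have hmem : (μ:ℝ) ∈ Icc (Φ c0) (Φ H) := by
      constructor
      · rw [hΦc0]; positivity
      · exact hΦH
    obtain ⟨x, hx, hfx⟩ := this hmem
    exact ⟨x, hx, hfx⟩
  refine ⟨fun j => (φ j h).toNNReal, ?_, h, ?_⟩
  · have : ((∑ j, (φ j h).toNNReal : ℝ≥0) : ℝ) = μ := by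
      push_cast
      exact hΦh
    exact_mod_cast this
  · intro j
    have hnn : 0 ≤ φ j h := by
      have := hφmono j hhmem.1
      rwa [hφc0 j] at this
    have := hφg j h
    rw [hg] at this
    simpa [min_eq_right hnn] using this

lemma exists_eq_gen (m : ℕ) (hm : 0 < m) (f : Fin m → ℝ≥0 → ℝ)
    (hmono : ∀ j, Monotone (f j)) (hc : ∀ j, Continuous (f j))
    (h0 : ∀ i j : Fin m, f i 0 = f j 0) (μ : ℝ≥0) :
    ∃ ν : Fin m → ℝ≥0, (∑ j, ν j = μ) ∧ ∃ h, ∀ j, f j (ν j) = h := by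
  classical
  set j0 : Fin m := ⟨0, hm⟩
  -- perturbed functions
  set F : ℕ → Fin m → ℝ≥0 → ℝ := fun n j x => f j x + (1 / (n + 1 : ℝ)) * x with hF
  have hεpos : ∀ n : ℕ, 0 < (1 / (n + 1 : ℝ)) := by
    intro n; positivity
  have hFs : ∀ n j, StrictMono (F n j) := by
    intro n j a b hab
    have h1 : f j a ≤ f j b := hmono j hab.le
    have h2 : (1 / (n + 1 : ℝ)) * a < (1 / (n + 1 : ℝ)) * b := by
      apply mul_lt_mul_of_pos_left _ (hεpos n)
      exact_mod_cast hab
    exact add_lt_add_of_le_of_lt h1 h2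
  have hFc : ∀ n j, Continuous (F n j) :=
    fun n j => (hc j).add (continuous_const.mul NNReal.continuous_coe)
  have hF0 : ∀ n, ∀ i j, F n i 0 = F n j 0 := by
    intro n i j; simp [hF, h0 i j]
  have hFtop : ∀ n j, Tendsto (F n j) atTop atTop := by
    intro n j
    have h1 : Tendsto (fun x : ℝ≥0 => f j 0 + (1 / (n + 1 : ℝ)) * x) atTop atTop := by
      apply tendsto_atTop_add_const_left
      apply Tendsto.const_mul_atTop (hεpos n)
      exact NNReal.tendsto_coe_atTop.2 tendsto_id
    apply tendsto_atTop_mono _ h1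
    intro x
    exact add_le_add_left (hmono j (zero_le : (0:ℝ≥0) ≤ x)) _
  -- choose approximate equalizers
  have hch : ∀ n : ℕ, ∃ ν : Fin m → ℝ≥0, (∑ j, ν j = μ) ∧ ∃ h, ∀ j, F n j (ν j) = h :=
    fun n => exists_eq_strict m hm (F n) (hFs n) (hFc n) (hF0 n) (hFtop n) μ
  choose ν hνsum hνval using hch
  -- compactness
  have hmem : ∀ n, ν n ∈ Icc (0 : Fin m → ℝ≥0) (fun _ => μ) := by
    intro n
    refine ⟨fun j => zero_le, fun j => ?_⟩
    rw [← hνsum n]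
    exact Finset.single_le_sum (fun i _ => zero_le) (Finset.mem_univ j)
  obtain ⟨w, hw, σ, hσ, hσtend⟩ := (isCompact_Icc).tendsto_subseq hmem
  have hwj : ∀ j, Tendsto (fun k => ν (σ k) j) atTop (𝓝 (w j)) :=
    fun j => (continuous_apply j).continuousAt.tendsto.comp hσtend
  refine ⟨w, ?_, f j0 (w j0), ?_⟩
  · -- sum
    have h1 : Tendsto (fun k => ∑ j, ν (σ k) j) atTop (𝓝 (∑ j, w j)) :=
      tendsto_finset_sum _ (fun j _ => hwj j)
    have h2 : Tendsto (fun k => ∑ j, ν (σ k) j) atTop (𝓝 μ) := by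
      simp only [hνsum]; exact tendsto_const_nhds
    exact tendsto_nhds_unique h1 h2
  · intro j
    -- f j (ν^k j) - f j0 (ν^k j0) = ε_k (ν^k j0 - ν^k j) → 0
    have hdiff : ∀ k, f j (ν (σ k) j) - f j0 (ν (σ k) j0)
        = (1 / (σ k + 1 : ℝ)) * ((ν (σ k) j0 : ℝ) - (ν (σ k) j : ℝ)) := by
      intro k
      obtain ⟨h, hh⟩ := hνval (σ k)
      have h1 := hh j
      have h2 := hh j0
      simp only [hF] at h1 h2
      nlinarith [h1, h2]
    have hbound : ∀ k, |f j (ν (σ k) j) - f j0 (ν (σ k) j0)| ≤ (1 / (σ k + 1 : ℝ)) * μ := by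
      intro k
      rw [hdiff k, abs_mul, abs_of_pos (hεpos (σ k))]
      apply mul_le_mul_of_nonneg_left _ (hεpos (σ k)).le
      rw [abs_sub_le_iff]
      constructor
      · have := (hmem (σ k)).2 j0
        have h2 : (0:ℝ) ≤ (ν (σ k) j : ℝ) := (ν (σ k) j).coe_nonneg
        have h3 : (ν (σ k) j0 : ℝ) ≤ μ := by exact_mod_cast this
        linarith
      · have := (hmem (σ k)).2 j
        have h2 : (0:ℝ) ≤ (ν (σ k) j0 : ℝ) := (ν (σ k) j0).coe_nonneg
        have h3 : (ν (σ k) j : ℝ) ≤ μ := by exact_mod_cast this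
        linarith
    have htend0 : Tendsto (fun k => (1 / (σ k + 1 : ℝ)) * μ) atTop (𝓝 0) := by
      have h1 : Tendsto (fun n : ℕ => (1 / (n + 1 : ℝ)) * μ) atTop (𝓝 0) := by
        have := tendsto_one_div_add_atTop_nhds_zero_nat (𝕜 := ℝ)
        simpa using this.mul_const (μ : ℝ)
      exact h1.comp hσ.tendsto_atTop
    have hzero : Tendsto (fun k => f j (ν (σ k) j) - f j0 (ν (σ k) j0)) atTop (𝓝 0) :=
      squeeze_zero_norm hbound htend0
    have hlim : Tendsto (fun k => f j (ν (σ k) j) - f j0 (ν (σ k) j0)) atTop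
        (𝓝 (f j (w j) - f j0 (w j0))) :=
      (((hc j).continuousAt.tendsto.comp (hwj j)).sub
        ((hc j0).continuousAt.tendsto.comp (hwj j0)))
    have := tendsto_nhds_unique hlim hzero
    linarith

/-- For continuous nondecreasing `f_1, …, f_m` with
`f_1(0) = ⋯ = f_m(0)`, every total mass admits an equalizing distribution, and
the resulting equalization `E` is a continuous nondecreasing function; moreover,
if some `f_j` is `K`-Lipschitz then `E` is `K`-Lipschitz. -/
theorem equalization_continuous (m : ℕ) (hm : 0 < m)
    (f : Fin m → ℝ≥0 → ℝ) (hmono : ∀ j, Monotone (f j))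
    (hcont : ∀ j, Continuous (f j))
    (h0 : ∀ i j : Fin m, f i 0 = f j 0) :
    ∃ E : ℝ≥0 → ℝ,
      (∀ μ : ℝ≥0, EqDistOn m f Finset.univ μ (E μ)) ∧
      Continuous E ∧ Monotone E ∧
      (∀ K : ℝ≥0, (∃ j, LipschitzWith K (f j)) → LipschitzWith K E) := by
  classical
  set j0 : Fin m := ⟨0, hm⟩
  have hne : (Finset.univ : Finset (Fin m)).Nonempty := ⟨j0, Finset.mem_univ _⟩
  choose ν hνsum hνval' using fun μ => exists_eq_gen m hm f hmono hcont h0 μ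
  set E : ℝ≥0 → ℝ := fun μ => f j0 (ν μ j0) with hE
  have hνval : ∀ μ j, f j (ν μ j) = E μ := by
    intro μ j
    obtain ⟨h, hh⟩ := hνval' μ
    rw [hh j, hE]
    exact (hh j0).symm
  -- key bounds
  have key1 : ∀ (μ : ℝ≥0) (w : Fin m → ℝ≥0), (∑ j, w j = μ) → ∃ j, E μ ≤ f j (w j) := by
    intro μ w hw
    by_contra hcon
    push_neg at hcon
    have hlt : ∀ j, w j < ν μ j := by
      intro j
      by_contra hle
      push_neg at hle
      have hgE : E μ ≤ f j (w j) := (hνval μ j) ▸ hmono j hle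
      exact absurd (hcon j) (not_lt.2 hgE)
    have := Finset.sum_lt_sum_of_nonempty hne (fun j _ => hlt j)
    rw [hw, hνsum μ] at this
    exact lt_irrefl _ this
  have key2 : ∀ (μ : ℝ≥0) (w : Fin m → ℝ≥0), (∑ j, w j = μ) → ∃ j, f j (w j) ≤ E μ := by
    intro μ w hw
    by_contra hcon
    push_neg at hcon
    have hlt : ∀ j, ν μ j < w j := by
      intro j
      by_contra hle
      push_neg at hle
      exact absurd (lt_of_le_of_lt ((hνval μ j) ▸ hmono j hle) (hcon j)) (lt_irrefl _)
    have := Finset.sum_lt_sum_of_nonempty hne (fun j _ => hlt j)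
    rw [hw, hνsum μ] at this
    exact lt_irrefl _ this
  -- monotone
  have hEmono : Monotone E := by
    intro a b hab
    have : ∃ j, ν a j ≤ ν b j := by
      by_contra hcon
      push_neg at hcon
      have := Finset.sum_lt_sum_of_nonempty hne (fun j _ => hcon j)
      rw [hνsum a, hνsum b] at this
      exact absurd hab (not_le.2 this)
    obtain ⟨j, hj⟩ := this
    calc E a = f j (ν a j) := (hνval a j).symm
      _ ≤ f j (ν b j) := hmono j hj
      _ = E b := hνval b j
  refine ⟨E, ?_, ?_, hEmono, ?_⟩
  · intro μ
    exact ⟨ν μ, by simpa using hνsum μ, fun j _ => hνval μ j⟩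
  · -- continuity
    rw [continuous_iff_continuousAt]
    intro μ
    rw [Metric.continuousAt_iff]
    intro ε hε
    rcases eq_or_lt_of_le (zero_le : (0:ℝ≥0) ≤ μ) with hμ0 | hμ0
    · -- μ = 0
      obtain rfl : μ = 0 := hμ0.symm
      have hν0 : ∀ j, ν 0 j = 0 := by
        intro j
        have h1 : ν 0 j ≤ ∑ i, ν 0 i :=
          Finset.single_le_sum (fun i _ => zero_le) (Finset.mem_univ j)
        rw [hνsum 0] at h1
        exact le_antisymm h1 (zero_le)
      have hδ : ∀ j, ∃ δ > 0, ∀ x : ℝ≥0, dist x 0 < δ → dist (f j x) (f j 0) < ε := by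
        intro j
        exact Metric.continuousAt_iff.1 (hcont j).continuousAt ε hε
      choose δf hδf hδprop using hδ
      refine ⟨Finset.univ.inf' hne δf, ?_, ?_⟩
      · exact (Finset.lt_inf'_iff hne).2 fun j _ => hδf j
      · intro x hx
        have hEx0 : E 0 ≤ E x := hEmono (zero_le : (0:ℝ≥0) ≤ x)
        have hup : E x < E 0 + ε := by
          obtain ⟨j, hj⟩ := key1 x (Function.update (fun _ => 0) j0 x) (by
            rw [Finset.sum_update_of_mem (Finset.mem_univ j0)]
            simp)
          have hwx : Function.update (fun _ => (0:ℝ≥0)) j0 x j ≤ x := by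
            rcases eq_or_ne j j0 with rfl | hjj
            · simp
            · simp [Function.update_of_ne hjj]
          have h1 : f j (Function.update (fun _ => (0:ℝ≥0)) j0 x j) ≤ f j x := hmono j hwx
          have hdx : dist x (0:ℝ≥0) < δf j := by
            exact lt_of_lt_of_le hx (Finset.inf'_le _ (Finset.mem_univ j))
          have h2 : dist (f j x) (f j 0) < ε := hδprop j x hdx
          have h3 : f j x < f j 0 + ε := by
            rw [Real.dist_eq, abs_sub_lt_iff] at h2
            linarith [h2.1]
          have h4 : f j 0 = E 0 := by
            have h5 := hνval 0 j
            rwa [hν0 j] at h5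
          calc E x ≤ f j x := le_trans hj h1
            _ < f j 0 + ε := h3
            _ = E 0 + ε := by rw [h4]
        rw [Real.dist_eq, abs_sub_lt_iff]
        constructor <;> linarith
    · -- μ > 0
      set r : ℝ≥0 → Fin m → ℝ≥0 := fun x j => x * ν μ j / μ with hr
      have hrsum : ∀ x, ∑ j, r x j = x := by
        intro x
        rw [hr]
        simp only
        rw [← Finset.sum_div, ← Finset.mul_sum, hνsum μ, mul_div_assoc,
          div_self hμ0.ne', mul_one]
      have hrcont : ∀ j, ContinuousAt (fun x : ℝ≥0 => f j (r x j)) μ := by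
        intro j
        apply (hcont j).continuousAt.comp
        apply ContinuousAt.div
        · exact (continuous_id.mul continuous_const).continuousAt
        · exact continuousAt_const
        · exact hμ0.ne'
      have hrμ : ∀ j, r μ j = ν μ j := by
        intro j
        rw [hr]
        simp only
        rw [mul_comm, mul_div_assoc, div_self hμ0.ne', mul_one]
      have hδ : ∀ j, ∃ δ > 0, ∀ x : ℝ≥0, dist x μ < δ → dist (f j (r x j)) (E μ) < ε := by
        intro j
        have := Metric.continuousAt_iff.1 (hrcont j) ε hε
        simpa [hrμ j, hνval μ j] using this
      choose δf hδf hδprop using hδ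
      refine ⟨Finset.univ.inf' hne δf, (Finset.lt_inf'_iff hne).2 fun j _ => hδf j, ?_⟩
      intro x hx
      have hdx : ∀ j, dist x μ < δf j :=
        fun j => lt_of_lt_of_le hx (Finset.inf'_le _ (Finset.mem_univ j))
      obtain ⟨ju, hju⟩ := key1 x (r x) (hrsum x)
      obtain ⟨jl, hjl⟩ := key2 x (r x) (hrsum x)
      have h1 := hδprop ju x (hdx ju)
      have h2 := hδprop jl x (hdx jl)
      rw [Real.dist_eq, abs_sub_lt_iff] at h1 h2 ⊢
      constructor <;> [linarith [h1.1]; linarith [h2.2]]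
  · -- Lipschitz
    rintro K ⟨j1, hK⟩
    rw [lipschitzWith_iff_dist_le_mul]
    intro a b
    wlog hab : a ≤ b generalizing a b
    · rw [dist_comm, dist_comm a b]
      exact this b a (le_of_not_ge hab)
    have hEab : E a ≤ E b := hEmono hab
    have hdab : dist a b = ((b - a : ℝ≥0) : ℝ) := by
      rw [NNReal.dist_eq, NNReal.coe_sub hab, abs_sub_comm,
        abs_of_nonneg (by simp [hab] : (0:ℝ) ≤ (b:ℝ) - (a:ℝ))]
    have hwsum : ∑ j, Function.update (ν a) j1 (ν a j1 + (b - a)) j = b := by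
      rw [Finset.sum_update_of_mem (Finset.mem_univ j1), ← Finset.erase_eq,
        add_comm, ← add_assoc, Finset.sum_erase_add _ _ (Finset.mem_univ j1),
        hνsum a, add_tsub_cancel_of_le hab]
    obtain ⟨j, hj⟩ := key1 b _ hwsum
    have hup : E b ≤ E a + K * dist a b := by
      rcases eq_or_ne j j1 with rfl | hjj
      · rw [Function.update_self] at hj
        have h1 : dist (f j (ν a j + (b - a))) (f j (ν a j)) ≤ K * dist (ν a j + (b - a)) (ν a j) :=
          hK.dist_le_mul _ _
        have h2 : dist (ν a j + (b - a)) (ν a j) = ((b - a : ℝ≥0) : ℝ) := by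
          rw [NNReal.dist_eq, NNReal.coe_add, add_sub_cancel_left,
            abs_of_nonneg (b - a : ℝ≥0).coe_nonneg]
        have h3 : f j (ν a j + (b - a)) - f j (ν a j) ≤ K * ((b - a : ℝ≥0) : ℝ) := by
          calc f j (ν a j + (b - a)) - f j (ν a j)
              ≤ |f j (ν a j + (b - a)) - f j (ν a j)| := le_abs_self _
            _ = dist (f j (ν a j + (b - a))) (f j (ν a j)) := (Real.dist_eq _ _).symm
            _ ≤ K * dist (ν a j + (b - a)) (ν a j) := h1
            _ = K * ((b - a : ℝ≥0) : ℝ) := by rw [h2]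
        have h4 : f j (ν a j) = E a := hνval a j
        rw [hdab]
        linarith
      · rw [Function.update_of_ne hjj] at hj
        have h4 : f j (ν a j) = E a := hνval a j
        have : (0:ℝ) ≤ K * dist a b := by positivity
        linarith
    rw [Real.dist_eq, abs_of_nonpos (by linarith : E a - E b ≤ 0)]
    linarith
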